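/- A graph G has a careful H-minor if and only if there exist pairwise-disjoint connected subsets {B_u ⊆ V_G : u ∈ V_H} and distinct vertices W = {w_{xy} : {x,y} ∈ E_H} ⊆ V_G \ ⋃_u B_u such that: (1) there are no edges between B_u and B_v for u ≠ v; (2) W is an independent set in G; (3) for every {x,y} ∈ E_H and every u ∈ V_H, there is an edge between w_{xy} and B_u if and only if u ∈ {x,y}. -/

import Mathlib

open SimpleGraph Set

section helpers
variable {V : Type*} (G : SimpleGraph V)

lemma induce_singleton_connected (v : V) : (G.induce {v}).Connected := by
  rw [SimpleGraph.connected_iff]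
  refine ⟨fun a b => ?_, ⟨⟨v, rfl⟩⟩⟩
  have : a = b := Subtype.ext ((show (a : V) = v from a.2).trans (show (b : V) = v from b.2).symm)
  rw [this]

lemma prefix_lemma (S T : Set V) :
    ∀ {a b : S} (_ : (G.induce S).Walk a b), (∃ t ∈ T, G.Adj b t) →
    ∃ (w : V) (P : Set V), w ∈ S ∧ P ⊆ S ∧ w ∉ P ∧ (∃ t ∈ T, G.Adj w t) ∧
      (∀ p ∈ P, ∀ t ∈ T, ¬ G.Adj p t) ∧
      ((P = ∅ ∧ w = (a : V)) ∨
        ((a : V) ∈ P ∧ (G.induce P).Connected ∧ ∃ p ∈ P, G.Adj w p)) := by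
  intro a b W
  induction W with
  | nil =>
    rename_i u
    intro hb
    exact ⟨u, ∅, u.2, empty_subset _, notMem_empty _, hb,
      by simp, Or.inl ⟨rfl, rfl⟩⟩
  | @cons a c b h W ih =>
    intro hb
    by_cases ha : ∃ t ∈ T, G.Adj a t
    · exact ⟨a, ∅, a.2, empty_subset _, notMem_empty _, ha,
        by simp, Or.inl ⟨rfl, rfl⟩⟩
    · obtain ⟨w, P, hwS, hPS, hwP, hwT, hPT, hcase⟩ := ih hb
      have hadj_ac : G.Adj (a : V) (c : V) := h
      have haw : (a : V) ≠ w := fun hh => ha (hh ▸ hwT)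
      refine ⟨w, insert (a : V) P, hwS, insert_subset a.2 hPS, ?_, hwT, ?_,
        Or.inr ⟨mem_insert _ _, ?_, ?_⟩⟩
      · rintro (h' | h')
        · exact haw h'.symm
        · exact hwP h'
      · rintro p (rfl | hp) t ht hadj
        · exact ha ⟨t, ht, hadj⟩
        · exact hPT p hp t ht hadj
      · rcases hcase with ⟨rfl, rfl⟩ | ⟨hcP, hconnP, _⟩
        · rw [Set.insert_eq, Set.union_empty]
          exact induce_singleton_connected G (a : V)
        · by_cases haP : (a : V) ∈ P
          · rwa [insert_eq_self.2 haP]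
          · rw [insert_eq]
            exact connected_induce_union (induce_singleton_connected G _).preconnected
              hconnP.preconnected rfl hcP hadj_ac
      · rcases hcase with ⟨_, rfl⟩ | ⟨_, _, p, hp, hadj⟩
        · exact ⟨a, mem_insert _ _, hadj_ac.symm⟩
        · exact ⟨p, mem_insert_of_mem _ hp, hadj⟩
end helpers


noncomputable section

/-- `H` is a minor of `G`, witnessed by pairwise-disjoint connected branch sets. -/
def IsMinor {V U : Type*} (G : SimpleGraph V) (H : SimpleGraph U) : Prop :=
  ∃ A : U → Set V, (∀ u : U, (G.induce (A u)).Connected) ∧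
    Pairwise (Function.onFun Disjoint A) ∧
    ∀ u v : U, H.Adj u v → ∃ a ∈ A u, ∃ b ∈ A v, G.Adj a b

/-- `H` is a strict minor of `G`: branch sets with edges between `A u` and `A v`
*exactly* when `{u,v}` is an edge of `H`. -/
def IsStrictMinor {V U : Type*} (G : SimpleGraph V) (H : SimpleGraph U) : Prop :=
  ∃ A : U → Set V, (∀ u : U, (G.induce (A u)).Connected) ∧
    Pairwise (Function.onFun Disjoint A) ∧
    ∀ u v : U, u ≠ v → (H.Adj u v ↔ ∃ a ∈ A u, ∃ b ∈ A v, G.Adj a b)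

/-- The subdivision `Ḣ` of `H`: every edge is replaced by a path of length two
through a new vertex. -/
def subdiv {U : Type*} (H : SimpleGraph U) : SimpleGraph (U ⊕ H.edgeSet) where
  Adj a b :=
    match a, b with
    | Sum.inl u, Sum.inr e => u ∈ (e : Sym2 U)
    | Sum.inr e, Sum.inl u => u ∈ (e : Sym2 U)
    | _, _ => False
  symm := ⟨by rintro (u | e) (v | f) h <;> simp_all⟩
  loopless := ⟨by rintro (u | e) h <;> simp_all⟩

/-- `H` is a careful minor of `G` if the subdivision of `H` is a strict minor of `G`. -/
def IsCarefulMinor {V U : Type*} (G : SimpleGraph V) (H : SimpleGraph U) : Prop :=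
  IsStrictMinor G (subdiv H)

theorem stmt12 {V U : Type*} (G : SimpleGraph V) (H : SimpleGraph U) :
    IsCarefulMinor G H ↔
      ∃ (B : U → Set V) (w : H.edgeSet → V),
        (∀ u : U, (G.induce (B u)).Connected) ∧
        Pairwise (Function.onFun Disjoint B) ∧
        Function.Injective w ∧
        (∀ (e : H.edgeSet) (u : U), w e ∉ B u) ∧
        (∀ u v : U, u ≠ v → ∀ a ∈ B u, ∀ b ∈ B v, ¬ G.Adj a b) ∧
        (∀ e e' : H.edgeSet, ¬ G.Adj (w e) (w e')) ∧
        (∀ (e : H.edgeSet) (u : U),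
          (∃ b ∈ B u, G.Adj (w e) b) ↔ u ∈ (e : Sym2 U)) := by
  constructor
  · rintro ⟨A, hconn, hdisj, hiff⟩
    have adj_inl_inr : ∀ (u : U) (e : H.edgeSet),
        (∃ a ∈ A (Sum.inl u), ∃ b ∈ A (Sum.inr e), G.Adj a b) ↔ u ∈ (e : Sym2 U) := by
      intro u e
      exact (hiff (Sum.inl u) (Sum.inr e) (by simp)).symm
    have noadj_ll : ∀ u v : U, u ≠ v →
        ∀ a ∈ A (Sum.inl u), ∀ b ∈ A (Sum.inl v), ¬ G.Adj a b := by
      intro u v huv a ha b hb hab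
      exact (hiff (Sum.inl u) (Sum.inl v) (by simp [huv])).2 ⟨a, ha, b, hb, hab⟩
    have noadj_rr : ∀ e e' : H.edgeSet, e ≠ e' →
        ∀ a ∈ A (Sum.inr e), ∀ b ∈ A (Sum.inr e'), ¬ G.Adj a b := by
      intro e e' hee a ha b hb hab
      exact (hiff (Sum.inr e) (Sum.inr e') (by simp [hee])).2 ⟨a, ha, b, hb, hab⟩
    have key : ∀ e : H.edgeSet, ∃ (x y : U) (w : V) (P : Set V),
        (e : Sym2 U) = s(x, y) ∧
        w ∈ A (Sum.inr e) ∧ P ⊆ A (Sum.inr e) ∧ w ∉ P ∧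
        (∃ t ∈ A (Sum.inl y), G.Adj w t) ∧
        (∀ p ∈ P, ∀ t ∈ A (Sum.inl y), ¬ G.Adj p t) ∧
        ((P = ∅ ∧ ∃ t ∈ A (Sum.inl x), G.Adj w t) ∨
          ((G.induce P).Connected ∧ (∃ p ∈ P, G.Adj w p) ∧
            ∃ p ∈ P, ∃ t ∈ A (Sum.inl x), G.Adj p t)) := by
      intro e
      obtain ⟨x, y, hxy⟩ : ∃ x y, (e : Sym2 U) = s(x, y) := by
        induction (e : Sym2 U) using Sym2.ind with
        | _ x y => exact ⟨x, y, rfl⟩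
      have hx : x ∈ (e : Sym2 U) := by rw [hxy]; exact Sym2.mem_mk_left x y
      have hy : y ∈ (e : Sym2 U) := by rw [hxy]; exact Sym2.mem_mk_right x y
      obtain ⟨ax, hax, bx, hbx, habx⟩ := (adj_inl_inr x e).2 hx
      obtain ⟨ay, hay, by', hby, haby⟩ := (adj_inl_inr y e).2 hy
      obtain ⟨W⟩ := (hconn (Sum.inr e)).preconnected ⟨bx, hbx⟩ ⟨by', hby⟩
      obtain ⟨w, P, hwS, hPS, hwP, hwT, hPT, hcase⟩ :=
        prefix_lemma G (A (Sum.inr e)) (A (Sum.inl y)) W ⟨ay, hay, haby.symm⟩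
      refine ⟨x, y, w, P, hxy, hwS, hPS, hwP, hwT, hPT, ?_⟩
      rcases hcase with ⟨hP, hwa⟩ | ⟨haP, hconnP, hex⟩
      · exact Or.inl ⟨hP, ax, hax, hwa ▸ habx.symm⟩
      · exact Or.inr ⟨hconnP, hex, bx, haP, ax, hax, habx.symm⟩
    choose x y w P hsxy hwS hPS hwP hwT hPT hcase using key
    set B : U → Set V := fun u =>
      A (Sum.inl u) ∪ ⋃ (e : H.edgeSet) (_ : x e = u), P e with hB
    have hmemB : ∀ (u : U) (v : V),
        v ∈ B u ↔ v ∈ A (Sum.inl u) ∨ ∃ e, x e = u ∧ v ∈ P e := by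
      intro u v
      simp [hB, Set.mem_iUnion]
    have hPsubB : ∀ e : H.edgeSet, P e ⊆ B (x e) := by
      intro e z hz
      exact (hmemB (x e) z).2 (Or.inr ⟨e, rfl, hz⟩)
    have hnoadj_A_P : ∀ (u : U) (e : H.edgeSet), x e ≠ u →
        ∀ a ∈ A (Sum.inl u), ∀ b ∈ P e, ¬ G.Adj a b := by
      intro u e hne a ha b hb hab
      by_cases hu : u = y e
      · subst hu
        exact hPT e b hb a ha hab.symm
      · have : u ∈ ((e : H.edgeSet) : Sym2 U) :=
          (adj_inl_inr u e).1 ⟨a, ha, b, hPS e hb, hab⟩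
        rw [hsxy e, Sym2.mem_iff] at this
        rcases this with h | h
        · exact hne h.symm
        · exact hu h
    refine ⟨B, w, ?_, ?_, ?_, ?_, ?_, ?_, ?_⟩
    · -- connectivity
      intro u
      obtain ⟨⟨u0, hu0⟩⟩ := (hconn (Sum.inl u)).nonempty
      apply G.induce_connected_of_patches u0 ((hmemB u u0).2 (Or.inl hu0))
      intro v hv
      rcases (hmemB u v).1 hv with hvA | ⟨e, hxe, hvP⟩
      · refine ⟨A (Sum.inl u), fun z hz => (hmemB u z).2 (Or.inl hz), hu0, hvA, ?_⟩
        exact (hconn (Sum.inl u)).preconnected _ _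
      · rcases hcase e with ⟨hP, _⟩ | ⟨hconnP, _, p, hpP, t, htA, hadj⟩
        · rw [hP] at hvP
          exact absurd hvP (notMem_empty v)
        · subst hxe
          refine ⟨A (Sum.inl (x e)) ∪ P e,
            fun z hz => (hmemB (x e) z).2 (by
              rcases hz with hz | hz
              · exact Or.inl hz
              · exact Or.inr ⟨e, rfl, hz⟩), Or.inl hu0, Or.inr hvP, ?_⟩
          exact (connected_induce_union (hconn _).preconnected hconnP.preconnected htA hpP hadj.symm).preconnected _ _
    · -- pairwise disjoint
      intro u v huv
      rw [Function.onFun, Set.disjoint_left]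
      intro z hzu hzv
      rcases (hmemB u z).1 hzu with h1 | ⟨e, hxe, h1⟩ <;>
        rcases (hmemB v z).1 hzv with h2 | ⟨e', hxe', h2⟩
      · exact Set.disjoint_left.1 (hdisj (show (Sum.inl u : U ⊕ H.edgeSet) ≠ Sum.inl v by
          simp [huv])) h1 h2
      · exact Set.disjoint_left.1 (hdisj (show (Sum.inl u : U ⊕ H.edgeSet) ≠ Sum.inr e' by
          simp)) h1 (hPS e' h2)
      · exact Set.disjoint_left.1 (hdisj (show (Sum.inr e : U ⊕ H.edgeSet) ≠ Sum.inl v by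
          simp)) (hPS e h1) h2
      · rcases eq_or_ne e e' with rfl | hee
        · exact huv (hxe ▸ hxe')
        · exact Set.disjoint_left.1 (hdisj (show (Sum.inr e : U ⊕ H.edgeSet) ≠ Sum.inr e' by
            simp [hee])) (hPS e h1) (hPS e' h2)
    · -- injective
      intro e e' h
      by_contra hne
      exact Set.disjoint_left.1 (hdisj (show (Sum.inr e : U ⊕ H.edgeSet) ≠ Sum.inr e' by
        simp [hne])) (hwS e) (h ▸ hwS e')
    · -- w e ∉ B u
      intro e u hmem
      rcases (hmemB u (w e)).1 hmem with h1 | ⟨e', hxe', h1⟩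
      · exact Set.disjoint_left.1 (hdisj (show (Sum.inr e : U ⊕ H.edgeSet) ≠ Sum.inl u by
          simp)) (hwS e) h1
      · rcases eq_or_ne e e' with rfl | hee
        · exact hwP e h1
        · exact Set.disjoint_left.1 (hdisj (show (Sum.inr e : U ⊕ H.edgeSet) ≠ Sum.inr e' by
            simp [hee])) (hwS e) (hPS e' h1)
    · -- no edges between B u and B v
      intro u v huv a ha b hb hab
      rcases (hmemB u a).1 ha with h1 | ⟨e, hxe, h1⟩ <;>
        rcases (hmemB v b).1 hb with h2 | ⟨e', hxe', h2⟩
      · exact noadj_ll u v huv a h1 b h2 hab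
      · exact hnoadj_A_P u e' (hxe' ▸ huv.symm) a h1 b h2 hab
      · exact hnoadj_A_P v e (hxe ▸ huv) b h2 a h1 hab.symm
      · rcases eq_or_ne e e' with rfl | hee
        · exact huv (hxe ▸ hxe')
        · exact noadj_rr e e' hee a (hPS e h1) b (hPS e' h2) hab
    · -- no edges among w's
      intro e e' hab
      rcases eq_or_ne e e' with rfl | hee
      · exact G.irrefl hab
      · exact noadj_rr e e' hee (w e) (hwS e) (w e') (hwS e') hab
    · -- the adjacency iff
      intro e u
      constructor
      · rintro ⟨b, hb, hadj⟩
        rcases (hmemB u b).1 hb with h1 | ⟨e', hxe', h1⟩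
        · exact (adj_inl_inr u e).1 ⟨b, h1, w e, hwS e, hadj.symm⟩
        · rcases eq_or_ne e e' with rfl | hee
          · rw [hsxy e]
            exact hxe' ▸ Sym2.mem_mk_left _ _
          · exact absurd hadj (noadj_rr e e' hee (w e) (hwS e) b (hPS e' h1))
      · intro hu
        rw [hsxy e, Sym2.mem_iff] at hu
        rcases hu with rfl | rfl
        · rcases hcase e with ⟨_, t, ht, hadj⟩ | ⟨_, ⟨p, hp, hadj⟩, _⟩
          · exact ⟨t, (hmemB (x e) t).2 (Or.inl ht), hadj⟩
          · exact ⟨p, hPsubB e hp, hadj⟩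
        · obtain ⟨t, ht, hadj⟩ := hwT e
          exact ⟨t, (hmemB (y e) t).2 (Or.inl ht), hadj⟩
  · rintro ⟨B, w, hBconn, hBdisj, hwinj, hwB, hBB, hww, hiff7⟩
    refine ⟨Sum.elim B (fun e => {w e}), ?_, ?_, ?_⟩
    · rintro (u | e)
      · exact hBconn u
      · exact induce_singleton_connected G (w e)
    · rintro (u | e) (v | f) hne
      · exact hBdisj (fun h => hne (congrArg Sum.inl h))
      · exact Set.disjoint_singleton_right.2 (hwB f u)
      · exact Set.disjoint_singleton_left.2 (hwB e v)
      · refine Set.disjoint_singleton_left.2 ?_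
        simp only [Sum.elim_inr, Set.mem_singleton_iff]
        exact fun h => hne (congrArg Sum.inr (hwinj h))
    · rintro (u | e) (v | f) hne
      · show False ↔ _
        constructor
        · exact False.elim
        · rintro ⟨a, ha, b, hb, hab⟩
          exact hBB u v (fun h => hne (congrArg Sum.inl h)) a ha b hb hab
      · show u ∈ (f : Sym2 U) ↔ _
        constructor
        · intro hu
          obtain ⟨b, hb, hadj⟩ := (hiff7 f u).2 hu
          exact ⟨b, hb, w f, rfl, hadj.symm⟩
        · rintro ⟨a, ha, b, rfl, hab⟩
          exact (hiff7 f u).1 ⟨a, ha, hab.symm⟩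
      · show v ∈ (e : Sym2 U) ↔ _
        constructor
        · intro hv
          obtain ⟨b, hb, hadj⟩ := (hiff7 e v).2 hv
          exact ⟨w e, rfl, b, hb, hadj⟩
        · rintro ⟨a, rfl, b, hb, hab⟩
          exact (hiff7 e v).1 ⟨b, hb, hab⟩
      · show False ↔ _
        constructor
        · exact False.elim
        · rintro ⟨a, rfl, b, rfl, hab⟩
          exact hww e f hab

end
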